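/- Strong consistency of the importance-sampling log-density (logpdf) estimator: almost surely, log((1/n) · ∑_{i<n} V_i) − log((1/n) · ∑_{i<n} W_i) converges to log(𝔼[V_0] / 𝔼[W_0]) as n → ∞. -/

import Mathlib

open MeasureTheory ProbabilityTheory Filter Topology

/-- **Strong consistency of the importance-sampling log-density (logpdf) estimator.**
If `(W i)` and `(V i)` are each i.i.d. sequences of nonnegative integrable real random
variables with positive means, then almost surely
`log ((1/n) * ∑_{i<n} V i) - log ((1/n) * ∑_{i<n} W i) → log (𝔼[V 0] / 𝔼[W 0])`. -/
theorem logpdf_estimator_strong_consistency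
    {Ω : Type*} [MeasurableSpace Ω] (μ : Measure Ω) [IsProbabilityMeasure μ]
    (W V : ℕ → Ω → ℝ)
    (hWmeas : ∀ i, Measurable (W i)) (hVmeas : ∀ i, Measurable (V i))
    (hWindep : iIndepFun W μ)
    (hVindep : iIndepFun V μ)
    (hWident : ∀ i, IdentDistrib (W i) (W 0) μ μ)
    (hVident : ∀ i, IdentDistrib (V i) (V 0) μ μ)
    (hWnonneg : ∀ᵐ ω ∂μ, 0 ≤ W 0 ω) (hVnonneg : ∀ᵐ ω ∂μ, 0 ≤ V 0 ω)
    (hWint : Integrable (W 0) μ) (hVint : Integrable (V 0) μ)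
    (hWpos : 0 < ∫ ω, W 0 ω ∂μ) (hVpos : 0 < ∫ ω, V 0 ω ∂μ) :
    ∀ᵐ ω ∂μ, Tendsto
      (fun n : ℕ =>
        Real.log ((1 / (n : ℝ)) * ∑ i ∈ Finset.range n, V i ω) -
          Real.log ((1 / (n : ℝ)) * ∑ i ∈ Finset.range n, W i ω))
      atTop (𝓝 (Real.log ((∫ ω, V 0 ω ∂μ) / ∫ ω, W 0 ω ∂μ))) := by
  have hW := ProbabilityTheory.strong_law_ae_real W hWint
    (fun i j hij => hWindep.indepFun hij) hWident
  have hV := ProbabilityTheory.strong_law_ae_real V hVint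
    (fun i j hij => hVindep.indepFun hij) hVident
  filter_upwards [hW, hV] with ω hWω hVω
  have hlogV : Tendsto (fun n : ℕ => Real.log ((1 / (n : ℝ)) * ∑ i ∈ Finset.range n, V i ω))
      atTop (𝓝 (Real.log (∫ ω, V 0 ω ∂μ))) := by
    have := (Real.continuousAt_log hVpos.ne').tendsto.comp hVω
    refine this.congr fun n => ?_
    simp [div_eq_inv_mul, one_div]
  have hlogW : Tendsto (fun n : ℕ => Real.log ((1 / (n : ℝ)) * ∑ i ∈ Finset.range n, W i ω))
      atTop (𝓝 (Real.log (∫ ω, W 0 ω ∂μ))) := by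
    have := (Real.continuousAt_log hWpos.ne').tendsto.comp hWω
    refine this.congr fun n => ?_
    simp [div_eq_inv_mul, one_div]
  have := hlogV.sub hlogW
  rwa [← Real.log_div hVpos.ne' hWpos.ne'] at this
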